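/- Let x₀, y₀ ∈ F with x₀^{q²−1} = −1, y₀^{q²−1} = −1, and suppose ξ := x₀^q·y₀ − x₀·y₀^q satisfies ξ^q = ξ and ξ ≠ 0. Then the map L : F × F → F × F, L(x₁,y₁) = (y₀^q·x₁ − x₀^q·y₁, −ξ⁻¹·(x₀·y₁ − x₁·y₀)), is a bijection, and for all (x₁,y₁) ∈ F × F one has (x₁·y₀^q + x₀·y₁^q − x₀^q·y₁ − x₁^q·y₀)^q = x₁·y₀^q + x₀·y₁^q − x₀^q·y₁ − x₁^q·y₀ if and only if the first coordinate s₀ = y₀^q·x₁ − x₀^q·y₁ of L(x₁,y₁) satisfies s₀^{q²} = s₀. (Hence the fiber of the fibration κ over a point of 𝔖₀₀ is identified with 𝔽_{q²} × 𝔸¹.) -/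

import Mathlib

/-- The change of coordinates `(x₁, y₁) ↦ (s₀, s₁)` on the fiber is a bijection, and the
`𝔽_q`-rationality condition on the fiber corresponds to `s₀ ∈ 𝔽_{q²}`. -/
theorem stmt6 (p : ℕ) (hp : p.Prime) (hodd : Odd p) (q : ℕ)
    (hq : ∃ n : ℕ, 0 < n ∧ q = p ^ n)
    (F : Type*) [Field F] [IsAlgClosed F] [CharP F p]
    (x₀ y₀ : F) (hx : x₀ ^ (q ^ 2 - 1) = -1) (hy : y₀ ^ (q ^ 2 - 1) = -1)
    (ξ : F) (hξdef : ξ = x₀ ^ q * y₀ - x₀ * y₀ ^ q) (hξ : ξ ^ q = ξ) (hξ0 : ξ ≠ 0) :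
    Function.Bijective (fun z : F × F =>
      ((y₀ ^ q * z.1 - x₀ ^ q * z.2, -(ξ⁻¹ * (x₀ * z.2 - z.1 * y₀))) : F × F)) ∧
    ∀ x₁ y₁ : F,
      ((x₁ * y₀ ^ q + x₀ * y₁ ^ q - x₀ ^ q * y₁ - x₁ ^ q * y₀) ^ q =
          x₁ * y₀ ^ q + x₀ * y₁ ^ q - x₀ ^ q * y₁ - x₁ ^ q * y₀ ↔
        (y₀ ^ q * x₁ - x₀ ^ q * y₁) ^ (q ^ 2) = y₀ ^ q * x₁ - x₀ ^ q * y₁) := by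
  obtain ⟨n, hn, rfl⟩ := hq
  have hqpos : 0 < p ^ n := pow_pos hp.pos n
  have hq2pos : 0 < (p ^ n) ^ 2 := pow_pos hqpos 2
  constructor
  · apply Function.bijective_iff_has_inverse.mpr
    refine ⟨fun s : F × F => (x₀ ^ (p ^ n) * s.2 - ξ⁻¹ * x₀ * s.1,
      y₀ ^ (p ^ n) * s.2 - ξ⁻¹ * y₀ * s.1), ?_, ?_⟩
    · intro z
      subst hξdef
      have h0 := hξ0
      have h0' : y₀ * x₀ ^ p ^ n - y₀ ^ p ^ n * x₀ ≠ 0 := by rw [mul_comm y₀, mul_comm _ x₀]; exact hξ0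
      refine Prod.ext ?_ ?_ <;> simp only <;> field_simp
      · ring
      · ring_nf; rw [← sub_mul, ← sub_mul, mul_right_comm, mul_inv_cancel₀ h0', one_mul]
    · intro z
      subst hξdef
      have h0' : y₀ * x₀ ^ p ^ n - y₀ ^ p ^ n * x₀ ≠ 0 := by rw [mul_comm y₀, mul_comm _ x₀]; exact hξ0
      refine Prod.ext ?_ ?_ <;> simp only <;> field_simp
      · ring_nf; rw [← sub_mul, ← sub_mul, mul_right_comm, mul_inv_cancel₀ h0', one_mul]
      · ring
  · intro x₁ y₁
    -- Frobenius facts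
    have frob_add : ∀ a b : F, (a + b) ^ (p ^ n) = a ^ (p ^ n) + b ^ (p ^ n) := by
      intro a b; haveI : Fact p.Prime := ⟨hp⟩; exact add_pow_char_pow a b p n
    have frob_sub : ∀ a b : F, (a - b) ^ (p ^ n) = a ^ (p ^ n) - b ^ (p ^ n) := by
      intro a b; haveI : Fact p.Prime := ⟨hp⟩; exact sub_pow_char_pow a b n
    have hx2 : x₀ ^ ((p ^ n) ^ 2) = -x₀ := by
      have h : (p ^ n) ^ 2 - 1 + 1 = (p ^ n) ^ 2 := Nat.succ_pred_eq_of_pos hq2pos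
      calc x₀ ^ ((p ^ n) ^ 2) = x₀ ^ ((p ^ n) ^ 2 - 1 + 1) := by rw [h]
        _ = x₀ ^ ((p ^ n) ^ 2 - 1) * x₀ := pow_succ _ _
        _ = -x₀ := by rw [hx]; ring
    have hy2 : y₀ ^ ((p ^ n) ^ 2) = -y₀ := by
      have h : (p ^ n) ^ 2 - 1 + 1 = (p ^ n) ^ 2 := Nat.succ_pred_eq_of_pos hq2pos
      calc y₀ ^ ((p ^ n) ^ 2) = y₀ ^ ((p ^ n) ^ 2 - 1 + 1) := by rw [h]
        _ = y₀ ^ ((p ^ n) ^ 2 - 1) * y₀ := pow_succ _ _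
        _ = -y₀ := by rw [hy]; ring
    set s := y₀ ^ (p ^ n) * x₁ - x₀ ^ (p ^ n) * y₁ with hs
    have hsq : s ^ (p ^ n) = x₀ * y₁ ^ (p ^ n) - x₁ ^ (p ^ n) * y₀ := by
      rw [hs, frob_sub, mul_pow, mul_pow, ← pow_mul, ← pow_mul, ← pow_two, hx2, hy2]
      ring
    have hA : x₁ * y₀ ^ (p ^ n) + x₀ * y₁ ^ (p ^ n) - x₀ ^ (p ^ n) * y₁ - x₁ ^ (p ^ n) * y₀
        = s + s ^ (p ^ n) := by rw [hsq, hs]; ring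
    have hs2 : s ^ ((p ^ n) ^ 2) = (s ^ (p ^ n)) ^ (p ^ n) := by
      rw [pow_two, pow_mul]
    rw [hA, frob_add, ← hs2]
    constructor
    · intro h
      have := h
      linear_combination this
    · intro h
      linear_combination h
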